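/- For every prior 𝒟 there exists a signaling scheme Z₀, each of whose signals is either a singleton signal or an equal-revenue binary signal, such that for every signaling scheme Z' and every m ∈ (0,1], 4·PFV(s_{Z₀}, m) ≥ PFV(s_{Z'}, m), where PFV(g, m) = ∫₀^m g(x)dx is the integration prefix sum of the surplus-mass function. -/

import Mathlib

open Finset MeasureTheory

namespace PD

noncomputable section

/-- Complementary CDF of a mass function `fS` at value `v i`. -/
def G {n : ℕ} (v fS : Fin n → ℝ) (i : Fin n) : ℝ :=
  ∑ j ∈ Finset.univ.filter (fun j => v i ≤ v j), fS j

/-- A signal is a probability mass function on the values. -/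
def IsSignal {n : ℕ} (fS : Fin n → ℝ) : Prop :=
  (∀ i, 0 ≤ fS i) ∧ ∑ i, fS i = 1

/-- The index of the seller's price: the smallest index maximizing `v i * G i`. -/
def priceIdx {n : ℕ} [NeZero n] (v fS : Fin n → ℝ) : Fin n :=
  (Finset.univ.filter (fun i => ∀ j, v j * G v fS j ≤ v i * G v fS i)).min' (by
    haveI : Nonempty (Fin n) := ⟨⟨0, Nat.pos_of_ne_zero (NeZero.ne n)⟩⟩
    obtain ⟨b, _, hb⟩ := Finset.exists_max_image (Finset.univ : Finset (Fin n))
      (fun i => v i * G v fS i) Finset.univ_nonempty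
    exact ⟨b, Finset.mem_filter.mpr ⟨Finset.mem_univ _, fun j => hb j (Finset.mem_univ _)⟩⟩)

/-- Consumer surplus of value `v i` under signal `fS`. -/
def cs {n : ℕ} [NeZero n] (v fS : Fin n → ℝ) (i : Fin n) : ℝ :=
  if v (priceIdx v fS) ≤ v i then v i - v (priceIdx v fS) else 0

/-- Revenue of a signal: the maximum of `v i * G i`. -/
def revSig {n : ℕ} [NeZero n] (v fS : Fin n → ℝ) : ℝ :=
  Finset.univ.sup' (by
    haveI : Nonempty (Fin n) := ⟨⟨0, Nat.pos_of_ne_zero (NeZero.ne n)⟩⟩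
    exact Finset.univ_nonempty) (fun i => v i * G v fS i)

/-- A signaling scheme for prior mass function `f`. -/
structure Scheme (n : ℕ) (f : Fin n → ℝ) where
  Q : ℕ
  sig : Fin Q → Fin n → ℝ
  wt : Fin Q → ℝ
  sig_isSignal : ∀ q, IsSignal (sig q)
  wt_nonneg : ∀ q, 0 ≤ wt q
  wt_sum : ∑ q, wt q = 1
  bayes : ∀ i, ∑ q, wt q * sig q i = f i

/-- Expected consumer surplus of value `v i` under scheme `Z`. -/
def csZ {n : ℕ} [NeZero n] (v f : Fin n → ℝ) (Z : Scheme n f) (i : Fin n) : ℝ :=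
  ∑ q, cs v (Z.sig q) i * (Z.wt q * Z.sig q i / f i)

/-- Expected revenue of a scheme. -/
def revZ {n : ℕ} [NeZero n] (v : Fin n → ℝ) {f : Fin n → ℝ} (Z : Scheme n f) : ℝ :=
  ∑ q, Z.wt q * revSig v (Z.sig q)

/-- A scheme is efficient if on every positive-weight signal, the smallest value
in the support maximizes `v * G`. -/
def Efficient {n : ℕ} (v : Fin n → ℝ) {f : Fin n → ℝ} (Z : Scheme n f) : Prop :=
  ∀ q, 0 < Z.wt q → ∀ i, (0 < Z.sig q i ∧ ∀ j, 0 < Z.sig q j → i ≤ j) →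
    ∀ j, v j * G v (Z.sig q) j ≤ v i * G v (Z.sig q) i

/-- A scheme is monotone if higher values get (weakly) higher expected surplus. -/
def MonotoneScheme {n : ℕ} [NeZero n] (v f : Fin n → ℝ) (Z : Scheme n f) : Prop :=
  ∀ i j : Fin n, v i < v j → csZ v f Z i ≤ csZ v f Z j

/-- A scheme is buyer-optimal if the total expected consumer surplus equals the
expected value minus the Myerson revenue. -/
def BuyerOptimal {n : ℕ} [NeZero n] (v f : Fin n → ℝ) (Z : Scheme n f) : Prop :=
  ∑ i, f i * csZ v f Z i = (∑ i, f i * v i) - revSig v f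

/-- The surplus-mass step function of a scheme: equal to `csZ i` on the quantile
interval `(F(v_{i-1}), F(v_i)]`. -/
def smf {n : ℕ} [NeZero n] (v f : Fin n → ℝ) (Z : Scheme n f) (x : ℝ) : ℝ :=
  ∑ i, if (∑ j ∈ Finset.univ.filter (fun j => j < i), f j) < x ∧
          x ≤ ∑ j ∈ Finset.univ.filter (fun j => j ≤ i), f j
       then csZ v f Z i else 0

/-- Sorted `m`-prefix sum of `g` on `(0,1]`: the infimum of `∫_T g` over
(measurable) subsets `T` of `(0,1]` of total length `m`. -/
def PF (g : ℝ → ℝ) (m : ℝ) : ℝ :=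
  sInf { r : ℝ | ∃ T : Set ℝ, T ⊆ Set.Ioc 0 1 ∧ MeasurableSet T ∧
    volume T = ENNReal.ofReal m ∧ r = ∫ x in T, g x }

/-- Integration `m`-prefix sum of `g`: `∫₀^m g`. -/
def PFV (g : ℝ → ℝ) (m : ℝ) : ℝ := ∫ x in Set.Ioc (0:ℝ) m, g x

/-- A singleton signal puts all mass on one value. -/
def IsSingleton {n : ℕ} (fS : Fin n → ℝ) : Prop :=
  ∃ i : Fin n, fS = fun j => if j = i then 1 else 0

/-- An equal-revenue binary signal on `v i < v j` puts mass `1 - v i / v j` on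
`v i` and `v i / v j` on `v j`. -/
def IsEqRevBinary {n : ℕ} (v : Fin n → ℝ) (fS : Fin n → ℝ) : Prop :=
  ∃ i j : Fin n, v i < v j ∧
    fS = fun l => if l = i then 1 - v i / v j else if l = j then v i / v j else 0

/-- `i` is the smallest value in the support of `fS`. -/
def MinSupp {n : ℕ} (fS : Fin n → ℝ) (i : Fin n) : Prop :=
  0 < fS i ∧ ∀ j, 0 < fS j → i ≤ j

end


set_option linter.unusedSectionVars false

section Aux

variable {n : ℕ} [NeZero n] {v f : Fin n → ℝ}

lemma G_eq (hv : StrictMono v) (fS : Fin n → ℝ) (j : Fin n) :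
    G v fS j = ∑ i ∈ Finset.univ.filter (fun i => j ≤ i), fS i := by
  unfold G
  apply Finset.sum_congr _ (fun _ _ => rfl)
  ext i
  simp [hv.le_iff_le]

lemma priceIdx_mem (v fS : Fin n → ℝ) :
    priceIdx v fS ∈ Finset.univ.filter
      (fun i => ∀ j, v j * G v fS j ≤ v i * G v fS i) :=
  Finset.min'_mem _ _

lemma priceIdx_opt (v fS : Fin n → ℝ) (j : Fin n) :
    v j * G v fS j ≤ v (priceIdx v fS) * G v fS (priceIdx v fS) := by
  have h := priceIdx_mem v fS
  rw [Finset.mem_filter] at h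
  exact h.2 j

lemma priceIdx_eq (v fS : Fin n → ℝ) (t : Fin n)
    (h1 : ∀ j, v j * G v fS j ≤ v t * G v fS t)
    (h2 : ∀ l, (∀ j, v j * G v fS j ≤ v l * G v fS l) → t ≤ l) :
    priceIdx v fS = t := by
  unfold priceIdx
  apply le_antisymm
  · exact Finset.min'_le _ _ (Finset.mem_filter.mpr ⟨Finset.mem_univ _, h1⟩)
  · apply Finset.le_min'
    intro y hy
    rw [Finset.mem_filter] at hy
    exact h2 y hy.2

lemma cs_eq (hv : StrictMono v) (fS : Fin n → ℝ) (i : Fin n) :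
    cs v fS i = if priceIdx v fS ≤ i then v i - v (priceIdx v fS) else 0 := by
  unfold cs
  simp only [hv.le_iff_le]

/-- the singleton signal at `j` -/
def sgl (j : Fin n) : Fin n → ℝ := fun l => if l = j then 1 else 0

lemma sgl_isSignal (j : Fin n) : IsSignal (sgl j) :=
  ⟨fun i => by unfold sgl; split <;> norm_num, by simp [sgl]⟩

lemma G_sgl (hv : StrictMono v) (j l : Fin n) :
    G v (sgl j) l = if l ≤ j then 1 else 0 := by
  rw [G_eq hv]
  unfold sgl
  rw [Finset.sum_ite_eq' (Finset.univ.filter (fun i => l ≤ i)) j (fun _ => (1:ℝ))]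
  simp

lemma priceIdx_sgl (hv : StrictMono v) (hvpos : ∀ i, 0 < v i) (j : Fin n) :
    priceIdx v (sgl j) = j := by
  apply priceIdx_eq
  · intro l
    rw [G_sgl hv, G_sgl hv, if_pos le_rfl, mul_one]
    split
    · next h => rw [mul_one]; exact hv.monotone h
    · next h => rw [mul_zero]; exact (hvpos j).le
  · intro l hl
    rcases le_or_gt l j with h | h
    · have := hl j
      rw [G_sgl hv, G_sgl hv, if_pos le_rfl, if_pos h, mul_one, mul_one] at this
      exact (hv.le_iff_le).mp this
    · exact h.le

lemma cs_sgl (hv : StrictMono v) (hvpos : ∀ i, 0 < v i) (j i : Fin n) :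
    cs v (sgl j) i = if j ≤ i then v i - v j else 0 := by
  rw [cs_eq hv, priceIdx_sgl hv hvpos]

/-- the equal revenue pair signal on t < i -/
noncomputable def prs (v : Fin n → ℝ) (t i : Fin n) : Fin n → ℝ :=
  fun l => if l = t then 1 - v t / v i else if l = i then v t / v i else 0

lemma prs_apply_split (hvpos : ∀ i, 0 < v i) {t i : Fin n} (hti : t ≠ i) (l : Fin n) :
    prs v t i l = (if l = t then 1 - v t / v i else 0) + (if l = i then v t / v i else 0) := by
  unfold prs
  rcases eq_or_ne l t with h | h
  · subst h
    rw [if_pos rfl, if_pos rfl, if_neg hti, add_zero]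
  · rw [if_neg h, if_neg h, zero_add]

lemma prs_isSignal (hv : StrictMono v) (hvpos : ∀ i, 0 < v i) {t i : Fin n} (h : t < i) :
    IsSignal (prs v t i) := by
  have h1 : 0 < v t / v i := div_pos (hvpos t) (hvpos i)
  have h2 : v t / v i < 1 := (div_lt_one (hvpos i)).mpr (hv h)
  constructor
  · intro l
    unfold prs
    split
    · linarith
    · split
      · linarith
      · exact le_refl 0
  · rw [Finset.sum_congr rfl (fun l _ => prs_apply_split hvpos h.ne l),
      Finset.sum_add_distrib, Finset.sum_ite_eq' Finset.univ t,
      Finset.sum_ite_eq' Finset.univ i]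
    simp

lemma G_prs (hv : StrictMono v) (hvpos : ∀ i, 0 < v i) {t i : Fin n} (h : t < i) (l : Fin n) :
    G v (prs v t i) l = if l ≤ t then 1 else if l ≤ i then v t / v i else 0 := by
  rw [G_eq hv, Finset.sum_congr rfl (fun l _ => prs_apply_split hvpos h.ne l),
    Finset.sum_add_distrib, Finset.sum_ite_eq' _ t, Finset.sum_ite_eq' _ i]
  simp only [Finset.mem_filter, Finset.mem_univ, true_and]
  rcases le_or_gt l t with h1 | h1
  · rw [if_pos h1, if_pos (h1.trans h.le), if_pos h1]
    ring
  · rw [if_neg (not_le.mpr h1), if_neg (not_le.mpr h1), zero_add]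

lemma priceIdx_prs (hv : StrictMono v) (hvpos : ∀ i, 0 < v i) {t i : Fin n} (h : t < i) :
    priceIdx v (prs v t i) = t := by
  have hvi := hvpos i
  have hvt := hvpos t
  have key : v t * G v (prs v t i) t = v t := by
    rw [G_prs hv hvpos h, if_pos le_rfl, mul_one]
  apply priceIdx_eq
  · intro l
    rw [key, G_prs hv hvpos h]
    split
    · next hl => rw [mul_one]; exact hv.monotone hl
    · split
      · next hl hl2 =>
        rw [mul_comm]
        calc v t / v i * v l ≤ v t / v i * v i := by
              apply mul_le_mul_of_nonneg_left (hv.monotone hl2) (le_of_lt (div_pos hvt hvi))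
          _ = v t := by field_simp
      · next _ _ => rw [mul_zero]; exact hvt.le
  · intro l hl
    by_contra hc
    push_neg at hc
    have := hl t
    rw [key, G_prs hv hvpos h, if_pos hc.le, mul_one] at this
    exact absurd (hv hc) (not_lt.mpr this)

lemma cs_prs (hv : StrictMono v) (hvpos : ∀ i, 0 < v i) {t i : Fin n} (h : t < i) (l : Fin n) :
    cs v (prs v t i) l = if t ≤ l then v l - v t else 0 := by
  rw [cs_eq hv, priceIdx_prs hv hvpos h]

lemma perSignal (hv : StrictMono v) (hvpos : ∀ i, 0 < v i) (fS : Fin n → ℝ)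
    (hS0 : ∀ i, 0 ≤ fS i) (k σ : Fin n) (hσk : σ ≤ k) :
    ∑ i ∈ Finset.univ.filter (fun i => i ≤ k), cs v fS i * fS i
      ≤ (∑ j ∈ Finset.univ.filter (fun j => j < σ), v j * fS j)
        + ∑ i ∈ Finset.univ.filter (fun i => σ ≤ i ∧ i ≤ k), (v i - v σ) * fS i := by
  set t := priceIdx v fS with ht
  have hcs : ∀ i, cs v fS i = if t ≤ i then v i - v t else 0 := cs_eq hv fS
  have hfirst : (0:ℝ) ≤ ∑ j ∈ Finset.univ.filter (fun j => j < σ), v j * fS j :=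
    Finset.sum_nonneg (fun j _ => mul_nonneg (hvpos j).le (hS0 j))
  rcases le_or_gt σ t with hcase | hcase
  · -- σ ≤ t : termwise bound
    have h1 : ∑ i ∈ Finset.univ.filter (fun i => i ≤ k), cs v fS i * fS i
        ≤ ∑ i ∈ Finset.univ.filter (fun i => i ≤ k),
            (if σ ≤ i then (v i - v σ) * fS i else 0) := by
      apply Finset.sum_le_sum
      intro i _
      rw [hcs i]
      rcases le_or_gt t i with h2 | h2
      · rw [if_pos h2, if_pos (hcase.trans h2)]
        exact mul_le_mul_of_nonneg_right
          (sub_le_sub_left (hv.monotone hcase) _) (hS0 i)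
      · rw [if_neg (not_le.mpr h2), zero_mul]
        split
        · next h3 => exact mul_nonneg (sub_nonneg.mpr (hv.monotone h3)) (hS0 i)
        · exact le_refl 0
    have h2 : ∑ i ∈ Finset.univ.filter (fun i => i ≤ k),
          (if σ ≤ i then (v i - v σ) * fS i else 0)
        = ∑ i ∈ Finset.univ.filter (fun i => σ ≤ i ∧ i ≤ k), (v i - v σ) * fS i := by
      rw [← Finset.sum_filter, Finset.filter_filter]
      apply Finset.sum_congr _ (fun _ _ => rfl)
      apply Finset.filter_congr
      intro i _
      simp only [and_comm]
    rw [h2] at h1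
    linarith
  · -- t < σ
    have hopt : v σ * G v fS σ ≤ v t * G v fS t := priceIdx_opt v fS σ
    have Gs : ∀ (a : Fin n), G v fS a = ∑ i, if a ≤ i then fS i else 0 := by
      intro a; rw [G_eq hv, Finset.sum_filter]
    have split1 : ∑ i ∈ Finset.univ.filter (fun i => i ≤ k), cs v fS i * fS i
        = (∑ i, if t ≤ i ∧ i < σ then (v i - v t) * fS i else 0)
          + ∑ i, if σ ≤ i ∧ i ≤ k then (v i - v t) * fS i else 0 := by
      rw [Finset.sum_filter, ← Finset.sum_add_distrib]
      apply Finset.sum_congr rfl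
      intro i _
      rw [hcs i]
      split_ifs <;> first | ring1 | (exfalso; omega)
    have hB : (∑ i, if σ ≤ i ∧ i ≤ k then (v i - v t) * fS i else 0)
        ≤ (∑ i ∈ Finset.univ.filter (fun i => σ ≤ i ∧ i ≤ k), (v i - v σ) * fS i)
          + (v σ - v t) * G v fS σ := by
      rw [Finset.sum_filter, Gs σ, Finset.mul_sum, ← Finset.sum_add_distrib]
      apply Finset.sum_le_sum
      intro i _
      have hnn : 0 ≤ (v σ - v t) * fS i :=
        mul_nonneg (sub_nonneg.mpr (hv.monotone hcase.le)) (hS0 i)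
      split_ifs with hA1 hA2 hA2
      · exact le_of_eq (by ring)
      · exact absurd hA1.1 (by omega)
      · linarith
      · rw [mul_zero]
        norm_num
    have hGsplit : G v fS t - G v fS σ = ∑ i, if t ≤ i ∧ i < σ then fS i else 0 := by
      rw [Gs t, Gs σ, ← Finset.sum_sub_distrib]
      apply Finset.sum_congr rfl
      intro i _
      split_ifs <;> first | ring1 | (exfalso; omega)
    have hA : (∑ i, if t ≤ i ∧ i < σ then (v i - v t) * fS i else 0)
        = (∑ i, if t ≤ i ∧ i < σ then v i * fS i else 0)
          - v t * (G v fS t - G v fS σ) := by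
      rw [hGsplit, Finset.mul_sum, ← Finset.sum_sub_distrib]
      apply Finset.sum_congr rfl
      intro i _
      split_ifs <;> ring1
    have hC : (∑ i, if t ≤ i ∧ i < σ then v i * fS i else 0)
        ≤ ∑ j ∈ Finset.univ.filter (fun j => j < σ), v j * fS j := by
      rw [Finset.sum_filter]
      apply Finset.sum_le_sum
      intro i _
      split_ifs
      · exact le_refl _
      · exact absurd ‹t ≤ i ∧ i < σ›.2 (by assumption)
      · exact mul_nonneg (hvpos i).le (hS0 i)
      · exact le_refl _
    rw [split1, hA]
    linarith

/-! ### The greedy pairing process -/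

/-- one purchase step: partner `i` buys subsidy at `t` -/
noncomputable def innerStep (v : Fin n → ℝ) (i t : Fin n) (s : (Fin n → ℝ) × ℝ) :
    (Fin n → ℝ) × ℝ :=
  (Function.update s.1 t (s.1 t - min (s.1 t) (s.2 * (v i - v t) / v t)),
   s.2 - min (s.1 t) (s.2 * (v i - v t) / v t) * (v t / (v i - v t)))

/-- partner `i` buys subsidy at `t = 0, 1, ..., m-1` (only `t < i`). -/
noncomputable def inner (v : Fin n → ℝ) (i : Fin n) : ℕ → (Fin n → ℝ) × ℝ → (Fin n → ℝ) × ℝ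
  | 0, s => s
  | (m+1), s =>
    if h : m < i.val then innerStep v i ⟨m, h.trans i.isLt⟩ (inner v i m s)
    else inner v i m s

lemma inner_zero (i : Fin n) (s : (Fin n → ℝ) × ℝ) : inner v i 0 s = s := rfl

lemma inner_succ (i : Fin n) (m : ℕ) (s : (Fin n → ℝ) × ℝ) :
    inner v i (m+1) s = if h : m < i.val then innerStep v i ⟨m, h.trans i.isLt⟩ (inner v i m s)
      else inner v i m s := rfl

/-- remaining subsidy pool after partners `0, ..., i-1` have been processed -/
noncomputable def pool (v f : Fin n → ℝ) : ℕ → Fin n → ℝ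
  | 0 => fun j => f j / 2
  | (i+1) => if h : i < n then (inner v ⟨i, h⟩ i (pool v f i, f ⟨i, h⟩ / 2)).1
             else pool v f i

/-- remaining capacity of partner `i` at the end of its turn -/
noncomputable def endC (v f : Fin n → ℝ) (i : Fin n) : ℝ :=
  (inner v i i.val (pool v f i.val, f i / 2)).2

/-- subsidy mass at `t` bought by partner `i` -/
noncomputable def bm (v f : Fin n → ℝ) (t i : Fin n) : ℝ :=
  pool v f i.val t - pool v f (i.val + 1) t

/-- partner mass of `i` used in the pair `(t,i)` -/
noncomputable def am (v f : Fin n → ℝ) (t i : Fin n) : ℝ :=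
  bm v f t i * (v t / (v i - v t))

lemma pool_succ (i : Fin n) :
    pool v f (i.val + 1) = (inner v i i.val (pool v f i.val, f i / 2)).1 := by
  show (if h : i.val < n then _ else _) = _
  rw [dif_pos i.isLt, Fin.eta]

lemma inner_untouched (v : Fin n → ℝ) (i : Fin n) (s0 : (Fin n → ℝ) × ℝ)
    (m : ℕ) (t : Fin n) (htm : m ≤ t.val) :
    (inner v i m s0).1 t = s0.1 t := by
  induction m with
  | zero => rfl
  | succ m ih =>
    rw [inner_succ]
    split
    · next h =>
      simp only [innerStep]
      rw [Function.update_of_ne (by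
        intro hc
        rw [hc] at htm
        simp at htm)]
      exact ih (by omega)
    · exact ih (by omega)

/-- helper for the capacity update -/
lemma cost_le_of_le {b c x y : ℝ} (hx : 0 < x) (hy : 0 < y) (h : b ≤ c * y / x) :
    b * (x / y) ≤ c := by
  have h2 : b * (x / y) ≤ (c * y / x) * (x / y) :=
    mul_le_mul_of_nonneg_right h (div_pos hx hy).le
  calc b * (x / y) ≤ (c * y / x) * (x / y) := h2
    _ = c := by field_simp

lemma inner_invariant (hv : StrictMono v) (hvpos : ∀ i, 0 < v i) (i : Fin n)
    (s0 : (Fin n → ℝ) × ℝ) (h0 : (∀ t, 0 ≤ s0.1 t) ∧ 0 ≤ s0.2) (m : ℕ) :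
    (∀ t, 0 ≤ (inner v i m s0).1 t) ∧ 0 ≤ (inner v i m s0).2 := by
  induction m with
  | zero => exact h0
  | succ m ih =>
    rw [inner_succ]
    split
    · next h =>
      set t₀ : Fin n := ⟨m, h.trans i.isLt⟩ with ht₀
      have hti : t₀ < i := by simp only [Fin.lt_def, ht₀]; omega
      have hvt : 0 < v t₀ := hvpos t₀
      have hvd : 0 < v i - v t₀ := sub_pos.mpr (hv hti)
      set r := (inner v i m s0).1 with hr
      set c := (inner v i m s0).2 with hc
      have hb0 : 0 ≤ min (r t₀) (c * (v i - v t₀) / v t₀) :=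
        le_min (ih.1 t₀) (div_nonneg (mul_nonneg ih.2 hvd.le) hvt.le)
      simp only [innerStep]
      constructor
      · intro t
        rcases eq_or_ne t t₀ with rfl | hne
        · rw [Function.update_self]
          exact sub_nonneg.mpr (min_le_left _ _)
        · rw [Function.update_of_ne hne]; exact ih.1 t
      · have := cost_le_of_le hvt hvd
          (min_le_right (r t₀) (c * (v i - v t₀) / v t₀))
        exact sub_nonneg.mpr this
    · exact ih

lemma inner_fst_step (hv : StrictMono v) (hvpos : ∀ i, 0 < v i) (i : Fin n)
    (s0 : (Fin n → ℝ) × ℝ) (h0 : (∀ t, 0 ≤ s0.1 t) ∧ 0 ≤ s0.2) (m : ℕ) (t : Fin n) :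
    (inner v i (m+1) s0).1 t ≤ (inner v i m s0).1 t := by
  rw [inner_succ]
  split
  · next h =>
    set t₀ : Fin n := ⟨m, h.trans i.isLt⟩ with ht₀
    have hti : t₀ < i := by simp only [Fin.lt_def, ht₀]; omega
    have hvt : 0 < v t₀ := hvpos t₀
    have hvd : 0 < v i - v t₀ := sub_pos.mpr (hv hti)
    set r := (inner v i m s0).1 with hr
    set c := (inner v i m s0).2 with hc
    have hinv := inner_invariant hv hvpos i s0 h0 m
    have hb0 : 0 ≤ min (r t₀) (c * (v i - v t₀) / v t₀) :=
      le_min (hinv.1 t₀) (div_nonneg (mul_nonneg hinv.2 hvd.le) hvt.le)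
    simp only [innerStep]
    rcases eq_or_ne t t₀ with rfl | hne
    · rw [Function.update_self]; linarith
    · rw [Function.update_of_ne hne]
  · exact le_refl _

lemma inner_fst_mono (hv : StrictMono v) (hvpos : ∀ i, 0 < v i) (i : Fin n)
    (s0 : (Fin n → ℝ) × ℝ) (h0 : (∀ t, 0 ≤ s0.1 t) ∧ 0 ≤ s0.2) (m m' : ℕ) (hmm : m ≤ m')
    (t : Fin n) : (inner v i m' s0).1 t ≤ (inner v i m s0).1 t := by
  induction m' with
  | zero => have h : m = 0 := by omega
            rw [h]
  | succ m' ih =>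
    rcases Nat.lt_or_ge m (m'+1) with hlt | hge
    · exact (inner_fst_step hv hvpos i s0 h0 m' t).trans (ih (by omega))
    · have h : m = m' + 1 := by omega
      rw [h]

lemma inner_cost (v : Fin n → ℝ) (i : Fin n) (s0 : (Fin n → ℝ) × ℝ) (m : ℕ) :
    (inner v i m s0).2
      = s0.2 - ∑ t, (s0.1 t - (inner v i m s0).1 t) * (v t / (v i - v t)) := by
  induction m with
  | zero =>
    rw [inner_zero]
    simp
  | succ m ih =>
    rw [inner_succ]
    split
    · next h =>
      set t₀ : Fin n := ⟨m, h.trans i.isLt⟩ with ht₀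
      set r := (inner v i m s0).1 with hr
      set c := (inner v i m s0).2 with hc
      set b := min (r t₀) (c * (v i - v t₀) / v t₀) with hb
      simp only [innerStep]
      have hsum : ∑ t, (s0.1 t - Function.update r t₀ (r t₀ - b) t) * (v t / (v i - v t))
          = (∑ t, (s0.1 t - r t) * (v t / (v i - v t))) + b * (v t₀ / (v i - v t₀)) := by
        have hterm : ∀ t : Fin n,
            (s0.1 t - Function.update r t₀ (r t₀ - b) t) * (v t / (v i - v t))
            = (s0.1 t - r t) * (v t / (v i - v t))
              + (if t = t₀ then b * (v t₀ / (v i - v t₀)) else 0) := by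
          intro t
          rcases eq_or_ne t t₀ with rfl | hne
          · rw [Function.update_self, if_pos rfl]
            ring
          · rw [Function.update_of_ne hne, if_neg hne]
            ring
        rw [Finset.sum_congr rfl (fun t _ => hterm t), Finset.sum_add_distrib,
          Finset.sum_ite_eq' Finset.univ t₀]
        simp
      rw [← hr, ← hc, ← hb, hsum, ih]
      ring
    · exact ih

lemma inner_dichotomy (hv : StrictMono v) (hvpos : ∀ i, 0 < v i) (i : Fin n)
    (s0 : (Fin n → ℝ) × ℝ) (h0 : (∀ t, 0 ≤ s0.1 t) ∧ 0 ≤ s0.2) (m : ℕ) :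
    (∀ t : Fin n, t.val < min m i.val → (inner v i m s0).1 t = 0)
      ∨ (inner v i m s0).2 = 0 := by
  induction m with
  | zero => left; intro t ht; omega
  | succ m ih =>
    have hinv := inner_invariant hv hvpos i s0 h0 m
    rcases Nat.lt_or_ge m i.val with h | h
    · set t₀ : Fin n := ⟨m, h.trans i.isLt⟩ with ht₀
      have hti : t₀ < i := by simp only [Fin.lt_def, ht₀]; omega
      have hvt : 0 < v t₀ := hvpos t₀
      have hvd : 0 < v i - v t₀ := sub_pos.mpr (hv hti)
      set r := (inner v i m s0).1 with hr
      set c := (inner v i m s0).2 with hc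
      have hstep : inner v i (m+1) s0 = innerStep v i t₀ (inner v i m s0) := by
        rw [inner_succ, dif_pos h]
      rcases ih with hL | hR
      · rcases min_cases (r t₀) (c * (v i - v t₀) / v t₀) with ⟨hmin, _⟩ | ⟨hmin, hlt⟩
        · left
          intro t ht
          rw [hstep]
          simp only [innerStep]
          rcases eq_or_ne t t₀ with rfl | hne
          · rw [Function.update_self, ← hr, ← hc, hmin]
            ring
          · rw [Function.update_of_ne hne]
            apply hL
            have : t.val ≠ m := fun hcc => hne (by rw [ht₀]; exact Fin.ext hcc)
            omega
        · right
          rw [hstep]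
          simp only [innerStep]
          rw [← hr, ← hc, hmin]
          field_simp; ring
      · right
        rw [hstep]
        simp only [innerStep]
        rw [← hr, ← hc, hR]
        have hmz : min (r t₀) (0 * (v i - v t₀) / v t₀) = 0 := by
          rw [zero_mul, zero_div]
          exact min_eq_right (hinv.1 t₀)
        rw [hmz, zero_mul, sub_zero]
    · have heq : inner v i (m+1) s0 = inner v i m s0 := by
        rw [inner_succ, dif_neg (by omega)]
      rw [heq]
      rcases ih with hL | hR
      · left; intro t ht; exact hL t (by omega)
      · right; exact hR

lemma inner_c_zero_stable (hv : StrictMono v) (hvpos : ∀ i, 0 < v i) (i : Fin n)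
    (s0 : (Fin n → ℝ) × ℝ) (h0 : (∀ t, 0 ≤ s0.1 t) ∧ 0 ≤ s0.2) (m m' : ℕ) (hmm : m ≤ m')
    (hz : (inner v i m s0).2 = 0) : inner v i m' s0 = inner v i m s0 := by
  induction m' with
  | zero => have h : m = 0 := by omega
            rw [h]
  | succ m' ih =>
    rcases Nat.lt_or_ge m (m'+1) with hlt | hge
    · have ihm : inner v i m' s0 = inner v i m s0 := ih (by omega)
      have hinv := inner_invariant hv hvpos i s0 h0 m'
      rw [inner_succ]
      split
      · next h =>
        set t₀ : Fin n := ⟨m', h.trans i.isLt⟩ with ht₀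
        set r := (inner v i m' s0).1 with hr
        set c := (inner v i m' s0).2 with hc
        have hcz : c = 0 := by rw [hc, ihm, hz]
        have hb : min (r t₀) (c * (v i - v t₀) / v t₀) = 0 := by
          rw [hcz, zero_mul, zero_div]
          exact min_eq_right (hinv.1 t₀)
        simp only [innerStep]
        rw [← hr, ← hc, hb, sub_zero, zero_mul, sub_zero, Function.update_eq_self]
        exact ihm
      · exact ihm
    · have h : m = m' + 1 := by omega
      rw [h]

lemma inner_pointer (hv : StrictMono v) (hvpos : ∀ i, 0 < v i) (i : Fin n)
    (s0 : (Fin n → ℝ) × ℝ) (h0 : (∀ t, 0 ≤ s0.1 t) ∧ 0 ≤ s0.2) (t₀ : Fin n)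
    (ht₀ : t₀.val < i.val) (hpos : (inner v i (t₀.val + 1) s0).1 t₀ ≠ 0) :
    (inner v i (t₀.val + 1) s0).2 = 0 := by
  have hinv := inner_invariant hv hvpos i s0 h0 t₀.val
  have hti : t₀ < i := by simp only [Fin.lt_def]; omega
  have hvt : 0 < v t₀ := hvpos t₀
  have hvd : 0 < v i - v t₀ := sub_pos.mpr (hv hti)
  set r := (inner v i t₀.val s0).1 with hr
  set c := (inner v i t₀.val s0).2 with hc
  have hstep : inner v i (t₀.val+1) s0 = innerStep v i t₀ (inner v i t₀.val s0) := by
    rw [inner_succ, dif_pos ht₀]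
  rcases min_cases (r t₀) (c * (v i - v t₀) / v t₀) with ⟨hmin, _⟩ | ⟨hmin, _⟩
  · exfalso
    apply hpos
    rw [hstep]
    simp only [innerStep]
    rw [Function.update_self, ← hr, ← hc, hmin]
    exact sub_self _
  · rw [hstep]
    simp only [innerStep]
    rw [← hr, ← hc, hmin]
    field_simp; ring

/-! ### pool-level lemmas -/

lemma pool_succ' (m : ℕ) :
    pool v f (m+1) = if h : m < n then (inner v ⟨m, h⟩ m (pool v f m, f ⟨m, h⟩ / 2)).1
      else pool v f m := rfl

lemma pool_nonneg (hv : StrictMono v) (hvpos : ∀ i, 0 < v i) (hf : ∀ i, 0 ≤ f i)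
    (m : ℕ) : ∀ j, 0 ≤ pool v f m j := by
  induction m with
  | zero => intro j; exact div_nonneg (hf j) (by norm_num)
  | succ m ih =>
    intro j
    rw [pool_succ']
    split
    · next h =>
      exact (inner_invariant hv hvpos ⟨m, h⟩ (pool v f m, f ⟨m, h⟩ / 2)
        ⟨ih, div_nonneg (hf _) (by norm_num)⟩ m).1 j
    · exact ih j

lemma pool_mono_succ (hv : StrictMono v) (hvpos : ∀ i, 0 < v i) (hf : ∀ i, 0 ≤ f i)
    (m : ℕ) (j : Fin n) : pool v f (m+1) j ≤ pool v f m j := by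
  rw [pool_succ']
  split
  · next h =>
    have := inner_fst_mono hv hvpos ⟨m, h⟩ (pool v f m, f ⟨m, h⟩ / 2)
      ⟨pool_nonneg hv hvpos hf m, div_nonneg (hf _) (by norm_num)⟩ 0 m (Nat.zero_le m) j
    rw [inner_zero] at this
    exact this
  · exact le_refl _

lemma pool_mono (hv : StrictMono v) (hvpos : ∀ i, 0 < v i) (hf : ∀ i, 0 ≤ f i)
    {m m' : ℕ} (hmm : m ≤ m') (j : Fin n) : pool v f m' j ≤ pool v f m j := by
  induction m' with
  | zero => have h : m = 0 := by omega
            rw [h]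
  | succ m' ih =>
    rcases Nat.lt_or_ge m (m'+1) with hlt | hge
    · exact (pool_mono_succ hv hvpos hf m' j).trans (ih (by omega))
    · have h : m = m' + 1 := by omega
      rw [h]

lemma bm_nonneg (hv : StrictMono v) (hvpos : ∀ i, 0 < v i) (hf : ∀ i, 0 ≤ f i)
    (t i : Fin n) : 0 ≤ bm v f t i :=
  sub_nonneg.mpr (pool_mono_succ hv hvpos hf i.val t)

lemma bm_eq_zero_of_ge (t i : Fin n) (hti : i ≤ t) : bm v f t i = 0 := by
  unfold bm
  rw [pool_succ i, inner_untouched v i _ i.val t hti]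
  exact sub_self _

lemma am_nonneg (hv : StrictMono v) (hvpos : ∀ i, 0 < v i) (hf : ∀ i, 0 ≤ f i)
    (t i : Fin n) : 0 ≤ am v f t i := by
  unfold am
  rcases lt_or_ge t i with h | h
  · exact mul_nonneg (bm_nonneg hv hvpos hf t i)
      (div_nonneg (hvpos t).le (sub_nonneg.mpr (hv.monotone h.le)))
  · rw [bm_eq_zero_of_ge t i h, zero_mul]

lemma surplus_term (hv : StrictMono v) (t i : Fin n) (h : t < i) :
    am v f t i * (v i - v t) = bm v f t i * v t := by
  unfold am
  have hd : v i - v t ≠ 0 := sub_ne_zero.mpr (hv h).ne'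
  field_simp
  try ring

lemma am_sum (i : Fin n) :
    ∑ t, am v f t i = f i / 2 - endC v f i := by
  have := inner_cost v i (pool v f i.val, f i / 2) i.val
  unfold endC at *
  rw [this]
  have hbm : ∀ t, am v f t i
      = ((pool v f i.val, f i / 2).1 t - (inner v i i.val (pool v f i.val, f i / 2)).1 t)
        * (v t / (v i - v t)) := by
    intro t
    unfold am bm
    rw [pool_succ i]
  rw [Finset.sum_congr rfl (fun t _ => hbm t)]
  simp

lemma endC_nonneg (hv : StrictMono v) (hvpos : ∀ i, 0 < v i) (hf : ∀ i, 0 ≤ f i)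
    (i : Fin n) : 0 ≤ endC v f i :=
  (inner_invariant hv hvpos i _
    ⟨pool_nonneg hv hvpos hf i.val, div_nonneg (hf i) (by norm_num)⟩ i.val).2

lemma full_dichotomy (hv : StrictMono v) (hvpos : ∀ i, 0 < v i) (hf : ∀ i, 0 ≤ f i)
    (i : Fin n) (hne : endC v f i ≠ 0) :
    ∀ t : Fin n, t.val < i.val → pool v f (i.val+1) t = 0 := by
  intro t ht
  rcases inner_dichotomy hv hvpos i (pool v f i.val, f i / 2)
      ⟨pool_nonneg hv hvpos hf i.val, div_nonneg (hf i) (by norm_num)⟩ i.val with hL | hR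
  · rw [pool_succ i]
    exact hL t (by omega)
  · exact absurd hR hne

lemma pointer_zero (hv : StrictMono v) (hvpos : ∀ i, 0 < v i) (hf : ∀ i, 0 ≤ f i)
    (i σ : Fin n) (hpos : pool v f (i.val+1) σ ≠ 0) :
    ∀ t : Fin n, σ < t → bm v f t i = 0 := by
  intro t hσt
  rcases le_or_gt i t with hit | hti
  · exact bm_eq_zero_of_ge t i hit
  · -- σ < t < i
    set s0 : (Fin n → ℝ) × ℝ := (pool v f i.val, f i / 2) with hs0
    have h0 : (∀ t, 0 ≤ s0.1 t) ∧ 0 ≤ s0.2 :=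
      ⟨pool_nonneg hv hvpos hf i.val, div_nonneg (hf i) (by norm_num)⟩
    have hσi : σ.val < i.val := by omega
    have hp1 : (inner v i i.val s0).1 σ ≠ 0 := by
      rw [← pool_succ i] at *
      exact hpos
    have hp2 : (inner v i (σ.val+1) s0).1 σ ≠ 0 := by
      intro hz
      apply hp1
      have hmono := inner_fst_mono hv hvpos i s0 h0 (σ.val+1) i.val (by omega) σ
      have hnn := (inner_invariant hv hvpos i s0 h0 i.val).1 σ
      rw [hz] at hmono
      linarith
    have hc0 : (inner v i (σ.val+1) s0).2 = 0 :=
      inner_pointer hv hvpos i s0 h0 σ hσi hp2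
    have hstable := inner_c_zero_stable hv hvpos i s0 h0 (σ.val+1) i.val (by omega) hc0
    unfold bm
    rw [pool_succ i, hstable, inner_untouched v i s0 (σ.val+1) t (by omega)]
    exact sub_self _

lemma sum_fin_le_eq_range (k : Fin n) (g : ℕ → ℝ) :
    ∑ i ∈ Finset.univ.filter (fun i : Fin n => i ≤ k), g i.val
      = ∑ m ∈ Finset.range (k.val+1), g m := by
  have h1 : ∑ i ∈ Finset.univ.filter (fun i : Fin n => i ≤ k), g i.val
      = ∑ i : Fin n, (fun m => if m ≤ k.val then g m else 0) i.val := by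
    rw [Finset.sum_filter]
    apply Finset.sum_congr rfl
    intro i _
    simp only [Fin.le_def]
  rw [h1, Fin.sum_univ_eq_sum_range (fun m => if m ≤ k.val then g m else 0) n,
    ← Finset.sum_filter]
  apply Finset.sum_congr _ (fun _ _ => rfl)
  ext m
  simp only [Finset.mem_filter, Finset.mem_range]
  have := k.isLt
  omega

lemma bm_telescope (k : Fin n) (t : Fin n) :
    ∑ i ∈ Finset.univ.filter (fun i : Fin n => i ≤ k), bm v f t i
      = f t / 2 - pool v f (k.val+1) t := by
  have h1 : ∑ i ∈ Finset.univ.filter (fun i : Fin n => i ≤ k), bm v f t i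
      = ∑ m ∈ Finset.range (k.val+1), (pool v f m t - pool v f (m+1) t) := by
    exact sum_fin_le_eq_range k (fun m => pool v f m t - pool v f (m+1) t)
  rw [h1, Finset.sum_range_sub' (fun m => pool v f m t)]
  rfl

/-- the pointer position after the turn of partner `k` -/
noncomputable def ptr (v f : Fin n → ℝ) (k : Fin n) : Fin n :=
  if h : (Finset.univ.filter (fun t => t < k ∧ pool v f (k.val+1) t ≠ 0)).Nonempty
  then (Finset.univ.filter (fun t => t < k ∧ pool v f (k.val+1) t ≠ 0)).min' h
  else k

lemma ptr_le (k : Fin n) : ptr v f k ≤ k := by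
  unfold ptr
  split
  · next h =>
    have := Finset.min'_mem _ h
    rw [Finset.mem_filter] at this
    exact this.2.1.le
  · exact le_refl _

lemma ptr_below (k : Fin n) (j : Fin n) (hj : j < ptr v f k) :
    pool v f (k.val+1) j = 0 := by
  have hjk : j < k := lt_of_lt_of_le hj (ptr_le k)
  by_contra hne
  unfold ptr at hj
  rw [dif_pos ⟨j, Finset.mem_filter.mpr ⟨Finset.mem_univ _, hjk, hne⟩⟩] at hj
  exact absurd (Finset.min'_le _ j (Finset.mem_filter.mpr ⟨Finset.mem_univ _, hjk, hne⟩))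
    (not_le.mpr hj)

lemma ptr_pos_of_lt (k : Fin n) (h : ptr v f k < k) :
    pool v f (k.val+1) (ptr v f k) ≠ 0 := by
  unfold ptr at h ⊢
  by_cases hne : (Finset.univ.filter (fun t => t < k ∧ pool v f (k.val+1) t ≠ 0)).Nonempty
  · rw [dif_pos hne]
    have := Finset.min'_mem _ hne
    rw [Finset.mem_filter] at this
    exact this.2.2
  · rw [dif_neg hne] at h
    exact absurd h (lt_irrefl k)

/-- total surplus of the greedy scheme on the prefix up to `k` -/
noncomputable def Pk (v f : Fin n → ℝ) (k : Fin n) : ℝ :=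
  ∑ i ∈ Finset.univ.filter (fun i : Fin n => i ≤ k), ∑ t, bm v f t i * v t

lemma keyI (hv : StrictMono v) (hvpos : ∀ i, 0 < v i) (hf : ∀ i, 0 ≤ f i) (k : Fin n) :
    ∑ j ∈ Finset.univ.filter (fun j => j < ptr v f k), v j * f j ≤ 2 * Pk v f k := by
  have step1 : ∑ j ∈ Finset.univ.filter (fun j => j < ptr v f k), v j * f j
      = ∑ j ∈ Finset.univ.filter (fun j => j < ptr v f k),
          2 * (v j * ∑ i ∈ Finset.univ.filter (fun i : Fin n => i ≤ k), bm v f j i) := by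
    apply Finset.sum_congr rfl
    intro j hj
    rw [Finset.mem_filter] at hj
    rw [bm_telescope k j, ptr_below k j hj.2, sub_zero]
    ring
  rw [step1]
  have step2 : ∑ j ∈ Finset.univ.filter (fun j => j < ptr v f k),
        2 * (v j * ∑ i ∈ Finset.univ.filter (fun i : Fin n => i ≤ k), bm v f j i)
      ≤ ∑ j, 2 * (v j * ∑ i ∈ Finset.univ.filter (fun i : Fin n => i ≤ k), bm v f j i) := by
    apply Finset.sum_le_sum_of_subset_of_nonneg (Finset.filter_subset _ _)
    intro j _ _
    have h0 : 0 ≤ ∑ i ∈ Finset.univ.filter (fun i : Fin n => i ≤ k), bm v f j i :=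
      Finset.sum_nonneg (fun i _ => bm_nonneg hv hvpos hf j i)
    exact mul_nonneg (by norm_num) (mul_nonneg (hvpos j).le h0)
  apply step2.trans
  apply le_of_eq
  have e1 : ∀ j : Fin n, 2 * (v j * ∑ i ∈ Finset.univ.filter (fun i : Fin n => i ≤ k), bm v f j i)
      = ∑ i ∈ Finset.univ.filter (fun i : Fin n => i ≤ k), 2 * (bm v f j i * v j) := by
    intro j
    rw [Finset.mul_sum, Finset.mul_sum]
    apply Finset.sum_congr rfl
    intro i _
    ring
  rw [Finset.sum_congr rfl (fun j _ => e1 j), Finset.sum_comm, Pk, Finset.mul_sum]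
  apply Finset.sum_congr rfl
  intro i _
  rw [Finset.mul_sum]

lemma keyII (hv : StrictMono v) (hvpos : ∀ i, 0 < v i) (hf : ∀ i, 0 ≤ f i) (k : Fin n) :
    ∑ i ∈ Finset.univ.filter (fun i => ptr v f k ≤ i ∧ i ≤ k),
        (v i - v (ptr v f k)) * f i ≤ 2 * Pk v f k := by
  set σ := ptr v f k with hσ
  have hterm : ∀ i ∈ Finset.univ.filter (fun i => σ ≤ i ∧ i ≤ k),
      (v i - v σ) * f i ≤ 2 * ∑ t, bm v f t i * v t := by
    intro i hi
    rw [Finset.mem_filter] at hi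
    obtain ⟨-, hσi, hik⟩ := hi
    have hsum_nn : 0 ≤ ∑ t, bm v f t i * v t :=
      Finset.sum_nonneg (fun t _ => mul_nonneg (bm_nonneg hv hvpos hf t i) (hvpos t).le)
    rcases eq_or_lt_of_le hσi with heq | hlt
    · rw [← heq] at hsum_nn
      rw [← heq, sub_self, zero_mul]
      linarith
    · have hσk : σ < k := lt_of_lt_of_le hlt hik
      have hpk : pool v f (k.val+1) σ ≠ 0 := ptr_pos_of_lt k hσk
      have hpkpos : 0 < pool v f (k.val+1) σ :=
        lt_of_le_of_ne (pool_nonneg hv hvpos hf _ σ) (Ne.symm hpk)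
      have hpos : pool v f (i.val+1) σ ≠ 0 := by
        have h2 := pool_mono hv hvpos hf (show i.val+1 ≤ k.val+1 by
          have := hik; rw [Fin.le_def] at this; omega) σ
        intro hz
        rw [hz] at h2
        linarith
      have hfull : endC v f i = 0 := by
        by_contra hne
        exact hpos (full_dichotomy hv hvpos hf i hne σ (by
          rw [Fin.lt_def] at hlt; omega))
      have hams : ∑ t, am v f t i = f i / 2 := by
        rw [am_sum i, hfull, sub_zero]
      have hbz : ∀ t, σ < t → bm v f t i = 0 := pointer_zero hv hvpos hf i σ hpos
      have htermwise : ∀ t : Fin n, (v i - v σ) * am v f t i ≤ bm v f t i * v t := by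
        intro t
        rcases le_or_gt t σ with htσ | htσ
        · have hti : t < i := lt_of_le_of_lt htσ hlt
          rw [← surplus_term hv t i hti]
          have h1 : v i - v σ ≤ v i - v t := sub_le_sub_left (hv.monotone htσ) _
          calc (v i - v σ) * am v f t i ≤ (v i - v t) * am v f t i :=
                mul_le_mul_of_nonneg_right h1 (am_nonneg hv hvpos hf t i)
            _ = am v f t i * (v i - v t) := by ring
        · have hb := hbz t htσ
          unfold am
          rw [hb, zero_mul, mul_zero, zero_mul]
      calc (v i - v σ) * f i = 2 * ((v i - v σ) * (f i / 2)) := by ring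
        _ = 2 * ((v i - v σ) * ∑ t, am v f t i) := by rw [hams]
        _ = 2 * ∑ t, (v i - v σ) * am v f t i := by rw [Finset.mul_sum]
        _ ≤ 2 * ∑ t, bm v f t i * v t := by
            apply mul_le_mul_of_nonneg_left _ (by norm_num : (0:ℝ) ≤ 2)
            exact Finset.sum_le_sum (fun t _ => htermwise t)
  calc ∑ i ∈ Finset.univ.filter (fun i => σ ≤ i ∧ i ≤ k), (v i - v σ) * f i
      ≤ ∑ i ∈ Finset.univ.filter (fun i => σ ≤ i ∧ i ≤ k), 2 * ∑ t, bm v f t i * v t :=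
        Finset.sum_le_sum hterm
    _ ≤ ∑ i ∈ Finset.univ.filter (fun i : Fin n => i ≤ k), 2 * ∑ t, bm v f t i * v t := by
        apply Finset.sum_le_sum_of_subset_of_nonneg
        · intro i hi
          rw [Finset.mem_filter] at hi ⊢
          exact ⟨hi.1, hi.2.2⟩
        · intro i _ _
          have h0 : 0 ≤ ∑ t, bm v f t i * v t :=
            Finset.sum_nonneg (fun t _ => mul_nonneg (bm_nonneg hv hvpos hf t i) (hvpos t).le)
          exact mul_nonneg (by norm_num) h0
    _ = 2 * Pk v f k := by rw [Pk, Finset.mul_sum]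

/-- the breakpoint bound : prefix surplus of any scheme is at most `4 Pk` -/
lemma breakpoint (hv : StrictMono v) (hvpos : ∀ i, 0 < v i) (hf : ∀ i, 0 < f i)
    (Z' : Scheme n f) (k : Fin n) :
    ∑ i ∈ Finset.univ.filter (fun i : Fin n => i ≤ k), f i * csZ v f Z' i
      ≤ 4 * Pk v f k := by
  have hstep1 : ∀ i : Fin n, f i * csZ v f Z' i
      = ∑ q, cs v (Z'.sig q) i * (Z'.wt q * Z'.sig q i) := by
    intro i
    unfold csZ
    rw [Finset.mul_sum]
    apply Finset.sum_congr rfl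
    intro q _
    field_simp
    rw [div_eq_iff (hf i).ne']; ring
  have hstep2 : ∑ i ∈ Finset.univ.filter (fun i : Fin n => i ≤ k), f i * csZ v f Z' i
      = ∑ q, Z'.wt q * ∑ i ∈ Finset.univ.filter (fun i : Fin n => i ≤ k),
          cs v (Z'.sig q) i * Z'.sig q i := by
    rw [Finset.sum_congr rfl (fun i _ => hstep1 i), Finset.sum_comm]
    apply Finset.sum_congr rfl
    intro q _
    rw [Finset.mul_sum]
    apply Finset.sum_congr rfl
    intro i _
    ring
  set σ := ptr v f k with hσ
  have hperq : ∀ q, Z'.wt q * ∑ i ∈ Finset.univ.filter (fun i : Fin n => i ≤ k),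
        cs v (Z'.sig q) i * Z'.sig q i
      ≤ Z'.wt q * ((∑ j ∈ Finset.univ.filter (fun j => j < σ), v j * Z'.sig q j)
          + ∑ i ∈ Finset.univ.filter (fun i => σ ≤ i ∧ i ≤ k), (v i - v σ) * Z'.sig q i) := by
    intro q
    apply mul_le_mul_of_nonneg_left _ (Z'.wt_nonneg q)
    exact perSignal hv hvpos (Z'.sig q) (Z'.sig_isSignal q).1 k σ (ptr_le k)
  have hsum2 : ∑ q, Z'.wt q * ((∑ j ∈ Finset.univ.filter (fun j => j < σ), v j * Z'.sig q j)
        + ∑ i ∈ Finset.univ.filter (fun i => σ ≤ i ∧ i ≤ k), (v i - v σ) * Z'.sig q i)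
      = (∑ j ∈ Finset.univ.filter (fun j => j < σ), v j * f j)
        + ∑ i ∈ Finset.univ.filter (fun i => σ ≤ i ∧ i ≤ k), (v i - v σ) * f i := by
    have expand : ∀ q, Z'.wt q * ((∑ j ∈ Finset.univ.filter (fun j => j < σ), v j * Z'.sig q j)
          + ∑ i ∈ Finset.univ.filter (fun i => σ ≤ i ∧ i ≤ k), (v i - v σ) * Z'.sig q i)
        = (∑ j ∈ Finset.univ.filter (fun j => j < σ), v j * (Z'.wt q * Z'.sig q j))
          + ∑ i ∈ Finset.univ.filter (fun i => σ ≤ i ∧ i ≤ k),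
              (v i - v σ) * (Z'.wt q * Z'.sig q i) := by
      intro q
      rw [mul_add, Finset.mul_sum, Finset.mul_sum]
      congr 1 <;> (apply Finset.sum_congr rfl; intro x _; ring)
    rw [Finset.sum_congr rfl (fun q _ => expand q), Finset.sum_add_distrib]
    congr 1
    · rw [Finset.sum_comm]
      apply Finset.sum_congr rfl
      intro j _
      rw [← Finset.mul_sum, Z'.bayes j]
    · rw [Finset.sum_comm]
      apply Finset.sum_congr rfl
      intro i _
      rw [← Finset.mul_sum, Z'.bayes i]
  have h4 : (∑ j ∈ Finset.univ.filter (fun j => j < σ), v j * f j)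
        + ∑ i ∈ Finset.univ.filter (fun i => σ ≤ i ∧ i ≤ k), (v i - v σ) * f i
      ≤ 4 * Pk v f k := by
    have h1 := keyI hv hvpos (fun i => (hf i).le) k
    have h2 := keyII hv hvpos (fun i => (hf i).le) k
    rw [← hσ] at h1 h2
    linarith
  calc ∑ i ∈ Finset.univ.filter (fun i : Fin n => i ≤ k), f i * csZ v f Z' i
      = ∑ q, Z'.wt q * ∑ i ∈ Finset.univ.filter (fun i : Fin n => i ≤ k),
          cs v (Z'.sig q) i * Z'.sig q i := hstep2
    _ ≤ ∑ q, Z'.wt q * ((∑ j ∈ Finset.univ.filter (fun j => j < σ), v j * Z'.sig q j)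
          + ∑ i ∈ Finset.univ.filter (fun i => σ ≤ i ∧ i ≤ k), (v i - v σ) * Z'.sig q i) :=
        Finset.sum_le_sum (fun q _ => hperq q)
    _ = _ := hsum2
    _ ≤ 4 * Pk v f k := h4

/-! ### assembling the greedy scheme -/

noncomputable def leftover (v f : Fin n → ℝ) (j : Fin n) : ℝ :=
  f j - (∑ i, bm v f j i) - (∑ t, am v f t j)

lemma npos : 0 < n := Nat.pos_of_ne_zero (NeZero.ne n)

lemma filter_le_last :
    Finset.univ.filter (fun i : Fin n => i ≤ (⟨n-1, by have := npos (n := n); omega⟩ : Fin n))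
      = Finset.univ := by
  apply Finset.filter_true_of_mem
  intro i _
  rw [Fin.le_def]
  have := i.isLt
  simp only []
  omega

lemma sum_bm_all (j : Fin n) :
    ∑ i, bm v f j i = f j / 2 - pool v f n j := by
  have h := bm_telescope (v := v) (f := f) (⟨n-1, by have := npos (n := n); omega⟩ : Fin n) j
  rw [filter_le_last] at h
  have h2 : (⟨n-1, by have := npos (n := n); omega⟩ : Fin n).val + 1 = n := by
    have := npos (n := n)
    simp only []
    omega
  rw [h2] at h
  exact h

lemma leftover_nonneg (hv : StrictMono v) (hvpos : ∀ i, 0 < v i) (hf : ∀ i, 0 ≤ f i)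
    (j : Fin n) : 0 ≤ leftover v f j := by
  unfold leftover
  rw [sum_bm_all j, am_sum j]
  have h1 := pool_nonneg hv hvpos hf n j
  have h2 := endC_nonneg hv hvpos hf j
  linarith

lemma gamma_eq (hv : StrictMono v) (hvpos : ∀ i, 0 < v i) {t i : Fin n} (h : t < i) :
    bm v f t i * (v i / (v i - v t)) = bm v f t i + am v f t i := by
  unfold am
  have hd : v i - v t ≠ 0 := sub_ne_zero.mpr (hv h).ne'
  have hvt : v t ≠ 0 := (hvpos t).ne'
  field_simp
  ring

lemma gamma_mul_fst (hv : StrictMono v) (hvpos : ∀ i, 0 < v i) {t i : Fin n} (h : t < i) :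
    bm v f t i * (v i / (v i - v t)) * (1 - v t / v i) = bm v f t i := by
  have hd : v i - v t ≠ 0 := sub_ne_zero.mpr (hv h).ne'
  have hvi : v i ≠ 0 := (hvpos i).ne'
  field_simp

lemma gamma_mul_snd (hv : StrictMono v) (hvpos : ∀ i, 0 < v i) {t i : Fin n} (h : t < i) :
    bm v f t i * (v i / (v i - v t)) * (v t / v i) = am v f t i := by
  unfold am
  have hd : v i - v t ≠ 0 := sub_ne_zero.mpr (hv h).ne'
  have hvi : v i ≠ 0 := (hvpos i).ne'
  field_simp

noncomputable def grSig (v : Fin n → ℝ) (x : (Fin n) ⊕ (Fin n × Fin n)) : Fin n → ℝ :=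
  match x with
  | Sum.inl j => sgl j
  | Sum.inr (t, i) => if t < i then prs v t i else sgl ⟨0, npos⟩

noncomputable def grWt (v f : Fin n → ℝ) (x : (Fin n) ⊕ (Fin n × Fin n)) : ℝ :=
  match x with
  | Sum.inl j => leftover v f j
  | Sum.inr (t, i) => if t < i then bm v f t i * (v i / (v i - v t)) else 0

/-- index equivalence for the greedy scheme -/
def eQ : ((Fin n) ⊕ (Fin n × Fin n)) ≃ Fin (n + n*n) :=
  (Equiv.sumCongr (Equiv.refl (Fin n)) finProdFinEquiv).trans finSumFinEquiv

lemma grBayes (hv : StrictMono v) (hvpos : ∀ i, 0 < v i) (l : Fin n) :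
    ∑ x : (Fin n) ⊕ (Fin n × Fin n), grWt v f x * grSig v x l = f l := by
  rw [Fintype.sum_sum_type]
  have part1 : ∑ j : Fin n, grWt v f (Sum.inl j) * grSig v (Sum.inl j) l
      = leftover v f l := by
    have hterm : ∀ j : Fin n, grWt v f (Sum.inl j) * grSig v (Sum.inl j) l
        = if l = j then leftover v f j else 0 := by
      intro j
      show leftover v f j * sgl j l = _
      unfold sgl
      rcases eq_or_ne l j with rfl | hne
      · rw [if_pos rfl, if_pos rfl, mul_one]
      · rw [if_neg hne, if_neg hne, mul_zero]
    rw [Finset.sum_congr rfl (fun j _ => hterm j), Finset.sum_ite_eq]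
    simp
  have part2term : ∀ t i : Fin n, grWt v f (Sum.inr (t, i)) * grSig v (Sum.inr (t, i)) l
      = (if l = t then (if t < i then bm v f t i else 0) else 0)
        + (if l = i then (if t < i then am v f t i else 0) else 0) := by
    intro t i
    show (if t < i then bm v f t i * (v i / (v i - v t)) else 0)
        * ((if t < i then prs v t i else sgl ⟨0, npos⟩) : Fin n → ℝ) l = _
    by_cases hti : t < i
    · rw [if_pos hti, if_pos hti]
      simp only [prs]
      rcases eq_or_ne l t with rfl | hlt
      · have hne : l ≠ i := ne_of_lt hti
        simp only [if_pos rfl, if_pos hti, if_neg hne, add_zero]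
        exact gamma_mul_fst hv hvpos hti
      · rw [if_neg hlt, if_neg hlt, zero_add]
        rcases eq_or_ne l i with rfl | hli
        · simp only [if_pos rfl, if_pos hti]
          exact gamma_mul_snd hv hvpos hti
        · rw [if_neg hli, if_neg hli, mul_zero]
    · rw [if_neg hti, zero_mul, if_neg hti, if_neg hti]
      split <;> split <;> simp
  have part2 : ∑ p : Fin n × Fin n, grWt v f (Sum.inr p) * grSig v (Sum.inr p) l
      = (∑ i, bm v f l i) + (∑ t, am v f t l) := by
    rw [Fintype.sum_prod_type]
    rw [Finset.sum_congr rfl (fun t _ => Finset.sum_congr rfl (fun i _ => part2term t i))]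
    rw [Finset.sum_congr rfl (fun t _ => Finset.sum_add_distrib)]
    rw [Finset.sum_add_distrib]
    congr 1
    · have hpull : ∀ t : Fin n, ∑ i : Fin n, (if l = t then (if t < i then bm v f t i else 0) else 0)
          = if l = t then (∑ i : Fin n, if t < i then bm v f t i else 0) else 0 := by
        intro t
        by_cases h : l = t
        · simp only [if_pos h]
        · simp only [if_neg h, Finset.sum_const_zero]
      rw [Finset.sum_congr rfl (fun t _ => hpull t), Finset.sum_ite_eq]
      simp only [Finset.mem_univ, if_pos]
      apply Finset.sum_congr rfl
      intro i _
      split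
      · rfl
      · next h => rw [bm_eq_zero_of_ge l i (not_lt.mp h)]
    · rw [Finset.sum_comm]
      have hpull : ∀ i : Fin n, ∑ t : Fin n, (if l = i then (if t < i then am v f t i else 0) else 0)
          = if l = i then (∑ t : Fin n, if t < i then am v f t i else 0) else 0 := by
        intro i
        by_cases h : l = i
        · simp only [if_pos h]
        · simp only [if_neg h, Finset.sum_const_zero]
      rw [Finset.sum_congr rfl (fun i _ => hpull i), Finset.sum_ite_eq]
      simp only [Finset.mem_univ, if_pos]
      apply Finset.sum_congr rfl
      intro t _
      split
      · rfl
      · next h =>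
        unfold am
        rw [bm_eq_zero_of_ge t l (not_lt.mp h), zero_mul]
  rw [part1, part2]
  unfold leftover
  ring

lemma grWtSum (hv : StrictMono v) (hvpos : ∀ i, 0 < v i) (hsum : ∑ i, f i = 1) :
    ∑ x : (Fin n) ⊕ (Fin n × Fin n), grWt v f x = 1 := by
  rw [Fintype.sum_sum_type]
  have part2 : ∑ p : Fin n × Fin n, grWt v f (Sum.inr p)
      = ∑ p : Fin n × Fin n, (bm v f p.1 p.2 + am v f p.1 p.2) := by
    apply Finset.sum_congr rfl
    intro p _
    rcases p with ⟨t, i⟩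
    show (if t < i then bm v f t i * (v i / (v i - v t)) else 0) = _
    by_cases hti : t < i
    · rw [if_pos hti]
      exact gamma_eq hv hvpos hti
    · rw [if_neg hti]
      have hb : bm v f t i = 0 := bm_eq_zero_of_ge t i (not_lt.mp hti)
      unfold am
      rw [hb, zero_mul, add_zero]
  have part1 : ∑ j : Fin n, grWt v f (Sum.inl j)
      = ∑ j, f j - (∑ j, ∑ i, bm v f j i) - (∑ j, ∑ t, am v f t j) := by
    show ∑ j : Fin n, leftover v f j = _
    unfold leftover
    rw [Finset.sum_sub_distrib, Finset.sum_sub_distrib]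
  rw [part1, part2]
  have e1 : ∑ p : Fin n × Fin n, (bm v f p.1 p.2 + am v f p.1 p.2)
      = (∑ t, ∑ i, bm v f t i) + (∑ t, ∑ i, am v f t i) := by
    rw [Finset.sum_add_distrib, Fintype.sum_prod_type, Fintype.sum_prod_type]
  have e2 : ∑ j, ∑ t, am v f t j = ∑ t, ∑ j, am v f t j := Finset.sum_comm
  rw [e1, e2, hsum]
  ring

/-- the greedy scheme -/
noncomputable def greedy (v f : Fin n → ℝ) (hv : StrictMono v) (hvpos : ∀ i, 0 < v i)
    (hf : ∀ i, 0 < f i) (hsum : ∑ i, f i = 1) : Scheme n f where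
  Q := n + n*n
  sig q := grSig v (eQ.symm q)
  wt q := grWt v f (eQ.symm q)
  sig_isSignal q := by
    show IsSignal (grSig v (eQ.symm q))
    rcases h : eQ.symm q with j | ⟨t, i⟩
    · exact sgl_isSignal j
    · show IsSignal (if t < i then prs v t i else sgl ⟨0, npos⟩)
      split
      · next hti => exact prs_isSignal hv hvpos hti
      · exact sgl_isSignal _
  wt_nonneg q := by
    show (0:ℝ) ≤ grWt v f (eQ.symm q)
    rcases h : eQ.symm q with j | ⟨t, i⟩
    · exact leftover_nonneg hv hvpos (fun i => (hf i).le) j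
    · show (0:ℝ) ≤ if t < i then bm v f t i * (v i / (v i - v t)) else 0
      split
      · next hti =>
        exact mul_nonneg (bm_nonneg hv hvpos (fun i => (hf i).le) t i)
          (div_nonneg (hvpos i).le (sub_nonneg.mpr (hv.monotone hti.le)))
      · exact le_refl 0
  wt_sum := by
    show ∑ q : Fin (n + n*n), grWt v f (eQ.symm q) = 1
    rw [Equiv.sum_comp eQ.symm (grWt v f)]
    exact grWtSum hv hvpos hsum
  bayes l := by
    show ∑ q : Fin (n + n*n), grWt v f (eQ.symm q) * grSig v (eQ.symm q) l = f l
    rw [show (∑ q : Fin (n + n*n), grWt v f (eQ.symm q) * grSig v (eQ.symm q) l)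
        = ∑ q : Fin (n + n*n), (fun x => grWt v f x * grSig v x l) (eQ.symm q) from rfl,
      Equiv.sum_comp eQ.symm (fun x => grWt v f x * grSig v x l)]
    exact grBayes hv hvpos l

lemma greedy_sig_form (hv : StrictMono v) (hvpos : ∀ i, 0 < v i)
    (hf : ∀ i, 0 < f i) (hsum : ∑ i, f i = 1) (q : Fin (n + n*n)) :
    IsSingleton ((greedy v f hv hvpos hf hsum).sig q)
      ∨ IsEqRevBinary v ((greedy v f hv hvpos hf hsum).sig q) := by
  show IsSingleton (grSig v (eQ.symm q)) ∨ IsEqRevBinary v (grSig v (eQ.symm q))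
  rcases h : eQ.symm q with j | ⟨t, i⟩
  · left
    exact ⟨j, rfl⟩
  · show IsSingleton (if t < i then prs v t i else sgl ⟨0, npos⟩)
      ∨ IsEqRevBinary v (if t < i then prs v t i else sgl ⟨0, npos⟩)
    by_cases hti : t < i
    · right
      rw [if_pos hti]
      exact ⟨t, i, hv hti, rfl⟩
    · left
      rw [if_neg hti]
      exact ⟨⟨0, npos⟩, rfl⟩

lemma greedy_csZ (hv : StrictMono v) (hvpos : ∀ i, 0 < v i)
    (hf : ∀ i, 0 < f i) (hsum : ∑ i, f i = 1) (i : Fin n) :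
    f i * csZ v f (greedy v f hv hvpos hf hsum) i = ∑ t, bm v f t i * v t := by
  set Z := greedy v f hv hvpos hf hsum with hZ
  have hstep1 : f i * csZ v f Z i = ∑ q, cs v (Z.sig q) i * (Z.wt q * Z.sig q i) := by
    unfold csZ
    rw [Finset.mul_sum]
    apply Finset.sum_congr rfl
    intro q _
    field_simp
    rw [div_eq_iff (hf i).ne']; ring
  rw [hstep1]
  have hQ : ∑ q, cs v (Z.sig q) i * (Z.wt q * Z.sig q i)
      = ∑ x : (Fin n) ⊕ (Fin n × Fin n),
          cs v (grSig v x) i * (grWt v f x * grSig v x i) := by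
    rw [show (∑ q, cs v (Z.sig q) i * (Z.wt q * Z.sig q i))
        = ∑ q : Fin (n + n*n), (fun x => cs v (grSig v x) i * (grWt v f x * grSig v x i))
            (eQ.symm q) from rfl,
      Equiv.sum_comp eQ.symm (fun x => cs v (grSig v x) i * (grWt v f x * grSig v x i))]
  rw [hQ, Fintype.sum_sum_type]
  have part1 : ∑ j : Fin n,
      cs v (grSig v (Sum.inl j)) i * (grWt v f (Sum.inl j) * grSig v (Sum.inl j) i) = 0 := by
    apply Finset.sum_eq_zero
    intro j _
    show cs v (sgl j) i * (leftover v f j * sgl j i) = 0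
    rcases eq_or_ne i j with rfl | hij
    · rw [cs_sgl hv hvpos, if_pos le_rfl, sub_self, zero_mul]
    · have : sgl j i = 0 := by unfold sgl; rw [if_neg hij]
      rw [this, mul_zero, mul_zero]
  have part2term : ∀ t i' : Fin n,
      cs v (grSig v (Sum.inr (t, i'))) i * (grWt v f (Sum.inr (t, i')) * grSig v (Sum.inr (t, i')) i)
      = if i = i' then (if t < i' then bm v f t i' * v t else 0) else 0 := by
    intro t i'
    show cs v (if t < i' then prs v t i' else sgl ⟨0, npos⟩) i
        * ((if t < i' then bm v f t i' * (v i' / (v i' - v t)) else 0)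
            * (if t < i' then prs v t i' else sgl ⟨0, npos⟩) i) = _
    by_cases hti : t < i'
    · rw [if_pos hti, if_pos hti, if_pos hti]
      simp only [prs]
      rcases eq_or_ne i t with rfl | hit
      · rw [cs_prs hv hvpos hti, if_pos le_rfl, sub_self, zero_mul,
          if_neg (ne_of_lt hti)]
      · rcases eq_or_ne i i' with rfl | hii
        · rw [if_pos rfl, cs_prs hv hvpos hti, if_pos hti.le, if_neg hit, if_pos rfl]
          rw [gamma_mul_snd hv hvpos hti, ← surplus_term hv t i hti]
          ring
        · rw [if_neg hit, if_neg hii, if_neg hii, mul_zero, mul_zero]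
    · rw [if_neg hti, if_neg hti, if_neg hti, zero_mul, mul_zero, ite_self]
  rw [part1, zero_add]
  rw [Fintype.sum_prod_type,
    Finset.sum_congr rfl (fun t _ => Finset.sum_congr rfl (fun i' _ => part2term t i')),
    Finset.sum_comm]
  have hpull : ∀ i' : Fin n,
      (∑ t : Fin n, if i = i' then (if t < i' then bm v f t i' * v t else 0) else 0)
      = if i = i' then (∑ t : Fin n, if t < i' then bm v f t i' * v t else 0) else 0 := by
    intro i'
    by_cases h : i = i'
    · simp only [if_pos h]
    · simp only [if_neg h, Finset.sum_const_zero]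
  rw [Finset.sum_congr rfl (fun i' _ => hpull i'), Finset.sum_ite_eq]
  simp only [Finset.mem_univ, if_pos]
  apply Finset.sum_congr rfl
  intro t _
  split
  · rfl
  · next h => rw [bm_eq_zero_of_ge t i (not_lt.mp h), zero_mul]

lemma greedy_prefix (hv : StrictMono v) (hvpos : ∀ i, 0 < v i)
    (hf : ∀ i, 0 < f i) (hsum : ∑ i, f i = 1) (k : Fin n) :
    ∑ i ∈ Finset.univ.filter (fun i : Fin n => i ≤ k),
        f i * csZ v f (greedy v f hv hvpos hf hsum) i = Pk v f k := by
  unfold Pk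
  exact Finset.sum_congr rfl (fun i _ => greedy_csZ hv hvpos hf hsum i)

/-! ### final assembly : integration and Abel summation -/

lemma abel_nonpos (N : ℕ) (Θ U : ℕ → ℝ) (hΘ0 : ∀ k, 0 ≤ Θ k) (hΘmono : ∀ k, Θ (k+1) ≤ Θ k)
    (hU : ∀ k, k < N → (∑ i ∈ Finset.range (k+1), U i) ≤ 0) :
    ∑ i ∈ Finset.range N, Θ i * U i ≤ 0 := by
  rcases Nat.eq_zero_or_pos N with rfl | hN
  · simp
  have h := Finset.sum_range_by_parts Θ U N
  simp only [smul_eq_mul] at h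
  rw [h]
  have h1 : Θ (N-1) * (∑ i ∈ Finset.range N, U i) ≤ 0 := by
    apply mul_nonpos_of_nonneg_of_nonpos (hΘ0 _)
    have : N = (N-1) + 1 := by omega
    rw [this]
    exact hU (N-1) (by omega)
  have h2 : (0:ℝ) ≤ ∑ i ∈ Finset.range (N-1), (Θ (i+1) - Θ i) * (∑ j ∈ Finset.range (i+1), U j) := by
    apply Finset.sum_nonneg
    intro i hi
    rw [Finset.mem_range] at hi
    have ha : Θ (i+1) - Θ i ≤ 0 := by linarith [hΘmono i]
    have hb := hU i (by omega)
    nlinarith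
  linarith

/-- the quantile breakpoints -/
noncomputable def FB (f : Fin n → ℝ) (i : Fin n) : ℝ :=
  ∑ j ∈ Finset.univ.filter (fun j => j ≤ i), f j

noncomputable def FA (f : Fin n → ℝ) (i : Fin n) : ℝ :=
  ∑ j ∈ Finset.univ.filter (fun j => j < i), f j

lemma FB_eq_FA_add (i : Fin n) : FB f i = FA f i + f i := by
  unfold FB FA
  have : Finset.univ.filter (fun j => j ≤ i) = insert i (Finset.univ.filter (fun j => j < i)) := by
    ext j
    simp only [Finset.mem_insert, Finset.mem_filter, Finset.mem_univ, true_and]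
    omega
  rw [this, Finset.sum_insert (by simp)]
  ring

lemma FA_nonneg (hf : ∀ i, 0 ≤ f i) (i : Fin n) : 0 ≤ FA f i :=
  Finset.sum_nonneg (fun j _ => hf j)

lemma FB_le_FA_of_lt (hf : ∀ i, 0 ≤ f i) {i j : Fin n} (hij : i < j) : FB f i ≤ FA f j := by
  unfold FB FA
  apply Finset.sum_le_sum_of_subset_of_nonneg
  · intro l hl
    rw [Finset.mem_filter] at hl ⊢
    exact ⟨hl.1, by omega⟩
  · intro l _ _
    exact hf l

lemma smf_eq_indicator (Z : Scheme n f) (x : ℝ) :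
    smf v f Z x = ∑ i, (Set.Ioc (FA f i) (FB f i)).indicator
      (fun _ => csZ v f Z i) x := by
  unfold smf
  apply Finset.sum_congr rfl
  intro i _
  rw [Set.indicator_apply]
  exact if_congr (Set.mem_Ioc).symm rfl rfl

lemma PFV_smf (hf : ∀ i, 0 < f i) (Z : Scheme n f) (m : ℝ) (hm : 0 < m) :
    PFV (smf v f Z) m
      = ∑ i, csZ v f Z i * (min m (FB f i) - min m (FA f i)) := by
  unfold PFV
  rw [MeasureTheory.integral_congr_ae (Filter.Eventually.of_forall
    (fun x => smf_eq_indicator Z x))]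
  rw [MeasureTheory.integral_finset_sum]
  · apply Finset.sum_congr rfl
    intro i _
    rw [MeasureTheory.setIntegral_indicator measurableSet_Ioc,
      MeasureTheory.setIntegral_const]
    rw [Set.Ioc_inter_Ioc]
    have hA0 : 0 ≤ FA f i := FA_nonneg (fun j => (hf j).le) i
    have hAB : FA f i ≤ FB f i := by
      rw [FB_eq_FA_add i]; linarith [hf i]
    rw [show (0:ℝ) ⊔ FA f i = FA f i from sup_eq_right.mpr hA0]
    rw [measureReal_def, Real.volume_Ioc]
    rw [smul_eq_mul]
    rcases le_or_gt m (FA f i) with hcase | hcase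
    · have h1 : m ⊓ FB f i = m := min_eq_left (hcase.trans hAB)
      have h2 : min m (FA f i) = m := min_eq_left hcase
      rw [h2]
      have h3 : ENNReal.ofReal (m ⊓ FB f i - FA f i) = 0 := by
        rw [h1]
        exact ENNReal.ofReal_eq_zero.mpr (by linarith)
      rw [h3]
      rw [h1]
      simp
    · have h2 : min m (FA f i) = FA f i := min_eq_right hcase.le
      rw [h2, ENNReal.toReal_ofReal (by
        rcases le_total m (FB f i) with h | h
        · rw [min_eq_left h]; linarith
        · rw [min_eq_right h]; linarith)]
      ring
  · intro i _
    rw [MeasureTheory.integrable_indicator_iff measurableSet_Ioc]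
    apply (MeasureTheory.integrableOn_const_iff).mpr
    right
    calc (volume.restrict (Set.Ioc (0:ℝ) m)) (Set.Ioc (FA f i) (FB f i))
        ≤ (volume.restrict (Set.Ioc (0:ℝ) m)) Set.univ := measure_mono (Set.subset_univ _)
      _ = volume (Set.Ioc (0:ℝ) m) := by
          rw [MeasureTheory.Measure.restrict_apply MeasurableSet.univ, Set.univ_inter]
      _ < ⊤ := by rw [Real.volume_Ioc]; exact ENNReal.ofReal_lt_top

lemma theta_mono (hf : ∀ i, 0 < f i) (m : ℝ) (hm : 0 < m) {i j : Fin n} (hij : i ≤ j) :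
    (min m (FB f j) - min m (FA f j)) / f j ≤ (min m (FB f i) - min m (FA f i)) / f i := by
  rcases eq_or_lt_of_le hij with rfl | hlt
  · exact le_refl _
  have hfi := hf i
  have hfj := hf j
  have hABi : FB f i = FA f i + f i := FB_eq_FA_add i
  have hABj : FB f j = FA f j + f j := FB_eq_FA_add j
  have hle : FB f i ≤ FA f j := FB_le_FA_of_lt (fun l => (hf l).le) hlt
  have hA0 : 0 ≤ FA f i := FA_nonneg (fun l => (hf l).le) i
  rcases le_or_gt m (FA f j) with hcase | hcase
  · -- left side is 0
    have h1 : min m (FB f j) = m := min_eq_left (by linarith)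
    have h2 : min m (FA f j) = m := min_eq_left hcase
    rw [h1, h2, sub_self, zero_div]
    apply div_nonneg _ hfi.le
    have : min m (FA f i) ≤ min m (FB f i) := min_le_min (le_refl m) (by linarith)
    linarith
  · -- right side is 1
    have h1 : min m (FA f i) = FA f i := min_eq_right (by linarith)
    have h2 : min m (FB f i) = FB f i := min_eq_right (by linarith)
    rw [h1, h2, hABi]
    have hnum : min m (FB f j) - min m (FA f j) ≤ f j := by
      have hAj : min m (FA f j) = FA f j := min_eq_right hcase.le
      rcases le_total m (FB f j) with h | h
      · rw [min_eq_left h, hAj]; linarith [hABj]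
      · rw [min_eq_right h, hAj]; linarith [hABj]
    calc (min m (FB f j) - min m (FA f j))/f j ≤ f j / f j :=
          (div_le_div_iff_of_pos_right hfj).mpr hnum
      _ = 1 := div_self hfj.ne'
      _ = (FA f i + f i - FA f i)/f i := by field_simp; ring

end Aux

theorem stmt10 (n : ℕ) [NeZero n] (v f : Fin n → ℝ)
    (hv : StrictMono v) (hvpos : ∀ i, 0 < v i)
    (hf : ∀ i, 0 < f i) (hsum : ∑ i, f i = 1) :
    ∃ Z : Scheme n f,
      (∀ q, IsSingleton (Z.sig q) ∨ IsEqRevBinary v (Z.sig q)) ∧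
      ∀ Z' : Scheme n f, ∀ m : ℝ, 0 < m → m ≤ 1 →
        PFV (smf v f Z') m ≤ 4 * PFV (smf v f Z) m := by
  refine ⟨greedy v f hv hvpos hf hsum, greedy_sig_form hv hvpos hf hsum, ?_⟩
  intro Z' m hm0 hm1
  set Z := greedy v f hv hvpos hf hsum with hZdef
  rw [PFV_smf hf Z' m hm0, PFV_smf hf Z m hm0]
  set len : Fin n → ℝ := fun i => min m (FB f i) - min m (FA f i) with hlen
  have hlen0 : ∀ i, 0 ≤ len i := by
    intro i
    have hAB : FA f i ≤ FB f i := by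
      rw [FB_eq_FA_add i]; linarith [hf i]
    have := min_le_min (le_refl m) hAB
    simp only [hlen]
    linarith
  set Θ : ℕ → ℝ := fun k => if h : k < n then len ⟨k, h⟩ / f ⟨k, h⟩ else 0 with hΘdef
  set U : ℕ → ℝ := fun k => if h : k < n then
      f ⟨k, h⟩ * csZ v f Z' ⟨k, h⟩ - 4 * (f ⟨k, h⟩ * csZ v f Z ⟨k, h⟩) else 0 with hUdef
  have hΘ0 : ∀ k, 0 ≤ Θ k := by
    intro k
    simp only [hΘdef]
    split
    · next h => exact div_nonneg (hlen0 _) (hf _).le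
    · exact le_refl 0
  have hΘmono : ∀ k, Θ (k+1) ≤ Θ k := by
    intro k
    by_cases h : k + 1 < n
    · have hk : k < n := by omega
      simp only [hΘdef]
      rw [dif_pos h, dif_pos hk]
      exact theta_mono hf m hm0 (show (⟨k, hk⟩ : Fin n) ≤ ⟨k+1, h⟩ from
        Fin.mk_le_mk.mpr (by omega))
    · have : Θ (k+1) = 0 := by simp only [hΘdef]; rw [dif_neg h]
      rw [this]
      exact hΘ0 k
  have hU : ∀ k, k < n → (∑ i ∈ Finset.range (k+1), U i) ≤ 0 := by
    intro k hk
    have hconv : ∑ i ∈ Finset.range (k+1), U i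
        = ∑ i ∈ Finset.univ.filter (fun i : Fin n => i ≤ (⟨k, hk⟩ : Fin n)), U i.val :=
      (sum_fin_le_eq_range (⟨k, hk⟩ : Fin n) U).symm
    have hUval : ∀ i : Fin n, U i.val
        = f i * csZ v f Z' i - 4 * (f i * csZ v f Z i) := by
      intro i
      simp only [hUdef]
      rw [dif_pos i.isLt, Fin.eta]
    rw [hconv, Finset.sum_congr rfl (fun i _ => hUval i), Finset.sum_sub_distrib,
      ← Finset.mul_sum]
    have h1 := breakpoint hv hvpos hf Z' (⟨k, hk⟩ : Fin n)
    have h2 := greedy_prefix hv hvpos hf hsum (⟨k, hk⟩ : Fin n)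
    rw [← hZdef] at h2
    rw [h2]
    linarith
  have habel := abel_nonpos n Θ U hΘ0 hΘmono hU
  have hconv2 : ∑ i ∈ Finset.range n, Θ i * U i = ∑ i : Fin n, Θ i.val * U i.val :=
    (Fin.sum_univ_eq_sum_range (fun k => Θ k * U k) n).symm
  have hterm : ∀ i : Fin n, Θ i.val * U i.val
      = csZ v f Z' i * len i - 4 * (csZ v f Z i * len i) := by
    intro i
    simp only [hΘdef, hUdef]
    rw [dif_pos i.isLt, dif_pos i.isLt, Fin.eta]
    have hfi : f i ≠ 0 := (hf i).ne'
    field_simp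
  rw [hconv2, Finset.sum_congr rfl (fun i _ => hterm i), Finset.sum_sub_distrib,
    ← Finset.mul_sum] at habel
  linarith

end PD
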